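/- In the modified Laplace matrix model, if the true rating matrix Θ has all entries in [−1,1], then the expected squared Frobenius norm on artificially created ratings satisfies E‖P_{Ω_Z \ Ω_X}(Θ − Z)‖_F² ≤ (mn/(e^{ε/2}+1)) · (1 + 8/ε²). -/

import Mathlib

open MeasureTheory Real

/-- Measurable space structure on `Option α`, via the equivalence with `α ⊕ PUnit`. -/
instance instMeasurableSpaceOption {α : Type u_1} [MeasurableSpace α] :
    MeasurableSpace (Option α) :=
  MeasurableSpace.comap (Equiv.optionEquivSumPUnit.{0, u_1} α) inferInstance

/-- The Laplace distribution with location `c` and scale `2/ε`,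
given by the density `t ↦ (ε/4) * exp (-ε * |t - c| / 2)`. -/
noncomputable def laplaceMeasure (ε c : ℝ) : Measure ℝ :=
  volume.withDensity fun t => ENNReal.ofReal (ε / 4 * Real.exp (-(ε * |t - c|) / 2))

/-- The modified Laplace mechanism on a single rating.  `none` is the missing rating `?`.
A present rating `x` is sent to `x + ξ` with probability `e^{ε/2}/(e^{ε/2}+1)` and to `?`
otherwise; a missing rating is sent to `?` with probability `e^{ε/2}/(e^{ε/2}+1)` and to `ξ`
otherwise, where `ξ ~ Laplace(0, 2/ε)`. -/
noncomputable def modLaplace (ε : ℝ) (x : Option ℝ) : Measure (Option ℝ) :=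
  match x with
  | some r =>
      ENNReal.ofReal (Real.exp (ε / 2) / (Real.exp (ε / 2) + 1)) •
          (laplaceMeasure ε r).map Option.some +
        ENNReal.ofReal (1 / (Real.exp (ε / 2) + 1)) • Measure.dirac (none : Option ℝ)
  | none =>
      ENNReal.ofReal (Real.exp (ε / 2) / (Real.exp (ε / 2) + 1)) •
          Measure.dirac (none : Option ℝ) +
        ENNReal.ofReal (1 / (Real.exp (ε / 2) + 1)) • (laplaceMeasure ε 0).map Option.some

/-- Distribution of the matrix `Z` obtained by applying the modified Laplace mechanism
independently to every entry of the partially observed rating matrix `X`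
(`none` encodes a missing entry). -/
noncomputable def modLaplaceMatrix (ε : ℝ) {m n : ℕ} (X : Fin m × Fin n → Option ℝ) :
    Measure (Fin m × Fin n → Option ℝ) :=
  Measure.pi fun p => modLaplace ε (X p)

/-- Support of the non-missing entries of a partially observed matrix. -/
def suppOf {m n : ℕ} (A : Fin m × Fin n → Option ℝ) : Finset (Fin m × Fin n) :=
  Finset.univ.filter fun p => (A p).isSome

/-! ### Auxiliary lemmas -/

section Aux

open Set Filter Polynomial

lemma ModLapAux.tendsto_polyExp (p : ℝ[X]) {b : ℝ} (hb : 0 < b) :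
    Tendsto (fun t : ℝ => p.eval t * exp (-(b * t))) atTop (nhds 0) := by
  have h1 : Tendsto (fun t : ℝ => b * t) atTop atTop :=
    Tendsto.const_mul_atTop hb tendsto_id
  have h2 := ((p.comp (C b⁻¹ * X)).tendsto_div_exp_atTop).comp h1
  have h3 : ∀ t : ℝ, eval (b⁻¹ * (b * t)) p / rexp (b * t)
      = p.eval t * exp (-(b * t)) := by
    intro t
    rw [inv_mul_cancel_left₀ hb.ne', exp_neg, div_eq_mul_inv]
  simpa only [Function.comp_def, eval_comp, eval_mul, eval_C, eval_X, h3] using h2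

lemma ModLapAux.isBigO_polyExp (p : ℝ[X]) {b : ℝ} (hb : 0 < b) :
    (fun t : ℝ => p.eval t * exp (-(b * t))) =O[atTop] fun t => exp (-(b/2) * t) := by
  refine (Asymptotics.isLittleO_iff_tendsto' ?_).2 ?_ |>.isBigO
  · exact Eventually.of_forall fun t h => absurd h (exp_ne_zero _)
  · have := ModLapAux.tendsto_polyExp p (half_pos hb)
    refine this.congr fun t => ?_
    rw [mul_div_assoc, ← exp_sub]
    congr 2
    ring

lemma ModLapAux.integrableOn_polyExp (p : ℝ[X]) {b : ℝ} (hb : 0 < b) :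
    IntegrableOn (fun t : ℝ => p.eval t * exp (-(b * t))) (Ioi 0) := by
  refine integrable_of_isBigO_exp_neg (b := b/2) (a := 0) (half_pos hb) ?_
    (ModLapAux.isBigO_polyExp p hb)
  exact ((p.continuous_aeval).mul (continuous_exp.comp (by continuity))).continuousOn

lemma ModLapAux.integrable_polyExpAbs (p : ℝ[X]) {b : ℝ} (hb : 0 < b) :
    Integrable (fun t : ℝ => p.eval t * exp (-(b * |t|))) := by
  have hIoi : IntegrableOn (fun t : ℝ => p.eval t * exp (-(b * |t|))) (Ioi 0) := by
    refine (ModLapAux.integrableOn_polyExp p hb).congr_fun (fun t ht => ?_) measurableSet_Ioi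
    rw [abs_of_pos ht]
  have hIic : IntegrableOn (fun t : ℝ => p.eval t * exp (-(b * |t|))) (Iic 0) := by
    rw [← Measure.map_neg_eq_self (volume : Measure ℝ)]
    have m : MeasurableEmbedding fun x : ℝ => -x :=
      (Homeomorph.neg ℝ).measurableEmbedding
    rw [MeasurableEmbedding.integrableOn_map_iff m]
    have heq : (fun t : ℝ => p.eval t * exp (-(b * |t|))) ∘ (fun x : ℝ => -x)
        = fun t : ℝ => (p.comp (-X)).eval t * exp (-(b * |t|)) := by
      funext t; simp [Function.comp, eval_comp]
    rw [heq]
    have hpre : (fun x : ℝ => -x) ⁻¹' (Iic 0) = Ici 0 := by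
      ext x; simp
    rw [hpre]
    rw [integrableOn_Ici_iff_integrableOn_Ioi]
    refine (ModLapAux.integrableOn_polyExp (p.comp (-X)) hb).congr_fun
      (fun t ht => ?_) measurableSet_Ioi
    rw [abs_of_pos ht]
  have := hIic.union hIoi
  rwa [Iic_union_Ioi, integrableOn_univ] at this

lemma ModLapAux.J0 {b : ℝ} (hb : 0 < b) : ∫ t in Ioi (0:ℝ), exp (-(b * t)) = 1 / b := by
  have := Real.integral_rpow_mul_exp_neg_mul_Ioi (a := 1) one_pos hb
  simpa [Real.Gamma_one] using this

lemma ModLapAux.J2 {b : ℝ} (hb : 0 < b) :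
    ∫ t in Ioi (0:ℝ), t ^ 2 * exp (-(b * t)) = 2 / b ^ 3 := by
  have := Real.integral_rpow_mul_exp_neg_mul_Ioi (a := 3) (by norm_num) hb
  rw [show (3:ℝ) - 1 = ((2:ℕ):ℝ) by norm_num] at this
  simp_rw [Real.rpow_natCast] at this
  rw [show ((1:ℝ)/b) ^ (3:ℝ) = (1/b) ^ (3:ℕ) by rw [← Real.rpow_natCast (1/b) 3]; norm_num,
    show Real.Gamma 3 = 2 by
      rw [show (3:ℝ) = (2:ℕ)+1 by norm_num, Real.Gamma_nat_eq_factorial]; norm_num] at this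
  rw [this]
  field_simp

lemma ModLapAux.M0 {b : ℝ} (hb : 0 < b) : ∫ t : ℝ, exp (-(b * |t|)) = 2 / b := by
  rw [integral_comp_abs (f := fun x => exp (-(b * x))), ModLapAux.J0 hb]
  ring

lemma ModLapAux.M2 {b : ℝ} (hb : 0 < b) : ∫ t : ℝ, t ^ 2 * exp (-(b * |t|)) = 4 / b ^ 3 := by
  have h : ∀ t : ℝ, t ^ 2 * exp (-(b * |t|)) = |t| ^ 2 * exp (-(b * |t|)) := fun t => by
    rw [sq_abs]
  rw [show (fun t : ℝ => t ^ 2 * exp (-(b * |t|)))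
      = fun t : ℝ => |t| ^ 2 * exp (-(b * |t|)) from funext h,
    integral_comp_abs (f := fun x => x ^ 2 * exp (-(b * x))), ModLapAux.J2 hb]
  ring

lemma ModLapAux.M1 {b : ℝ} : ∫ t : ℝ, t * exp (-(b * |t|)) = 0 := by
  have h := integral_neg_eq_self (fun t : ℝ => t * exp (-(b * |t|))) volume
  simp only [abs_neg, neg_mul] at h
  rw [integral_neg] at h
  linarith

lemma ModLapAux.iE {b : ℝ} (hb : 0 < b) : Integrable (fun t : ℝ => exp (-(b * |t|))) := by
  have h := ModLapAux.integrable_polyExpAbs (C 1) hb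
  simp only [eval_C, one_mul] at h
  exact h

lemma ModLapAux.iT {b : ℝ} (hb : 0 < b) : Integrable (fun t : ℝ => t * exp (-(b * |t|))) := by
  have h := ModLapAux.integrable_polyExpAbs X hb
  simp only [eval_X] at h
  exact h

lemma ModLapAux.iT2 {b : ℝ} (hb : 0 < b) :
    Integrable (fun t : ℝ => t ^ 2 * exp (-(b * |t|))) := by
  have h := ModLapAux.integrable_polyExpAbs (X ^ 2) hb
  simp only [eval_pow, eval_X] at h
  exact h

lemma ModLapAux.iSq (c : ℝ) {b : ℝ} (hb : 0 < b) :
    Integrable (fun t : ℝ => (c - t) ^ 2 * exp (-(b * |t|))) := by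
  have h := ModLapAux.integrable_polyExpAbs ((C c - X) ^ 2) hb
  simpa using h

lemma ModLapAux.K (c : ℝ) {b : ℝ} (hb : 0 < b) :
    ∫ t : ℝ, (c - t) ^ 2 * exp (-(b * |t|)) = c ^ 2 * (2 / b) + 4 / b ^ 3 := by
  have h : (fun t : ℝ => (c - t) ^ 2 * exp (-(b * |t|)))
      = fun t : ℝ => c ^ 2 * exp (-(b * |t|)) +
          ((-2 * c) * (t * exp (-(b * |t|))) + t ^ 2 * exp (-(b * |t|))) := by
    funext t; ring
  have h1 : Integrable (fun t : ℝ => c ^ 2 * exp (-(b * |t|))) := (ModLapAux.iE hb).const_mul _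
  have h2 : Integrable (fun t : ℝ => (-2 * c) * (t * exp (-(b * |t|)))) :=
    (ModLapAux.iT hb).const_mul _
  have h3 := ModLapAux.iT2 (b := b) hb
  have h23 : Integrable (fun t : ℝ =>
      (-2 * c) * (t * exp (-(b * |t|))) + t ^ 2 * exp (-(b * |t|))) := h2.add h3
  rw [h]
  rw [integral_add h1 h23]
  rw [integral_add h2 h3]
  rw [MeasureTheory.integral_const_mul, MeasureTheory.integral_const_mul,
    ModLapAux.M0 hb, ModLapAux.M1, ModLapAux.M2 hb]
  ring

/-! Measurability on `Option`. -/

lemma ModLapAux.measurable_optionEquiv {α : Type*} [MeasurableSpace α] :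
    Measurable (Equiv.optionEquivSumPUnit.{0} α) :=
  measurable_iff_comap_le.2 le_rfl

lemma ModLapAux.measurable_some {α : Type*} [MeasurableSpace α] :
    Measurable (Option.some : α → Option α) := by
  rw [measurable_iff_comap_le]
  show MeasurableSpace.comap Option.some
    (MeasurableSpace.comap (Equiv.optionEquivSumPUnit α) inferInstance) ≤ _
  rw [MeasurableSpace.comap_comp]
  have h : (Equiv.optionEquivSumPUnit.{0} α) ∘ Option.some = Sum.inl := by
    funext t; rfl
  rw [h]
  exact measurable_iff_comap_le.1 measurable_inl

lemma ModLapAux.measurable_optionElim {α : Type*} [MeasurableSpace α] {g : α → ENNReal}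
    (hg : Measurable g) (z0 : ENNReal) : Measurable (fun z : Option α => z.elim z0 g) := by
  have h : (fun z : Option α => z.elim z0 g)
      = (Sum.elim g (fun _ : PUnit => z0)) ∘ (Equiv.optionEquivSumPUnit α) := by
    funext z; cases z <;> rfl
  rw [h]
  exact (hg.sumElim measurable_const).comp ModLapAux.measurable_optionEquiv

/-! The Laplace measure. -/

lemma ModLapAux.measurable_laplaceDensity (ε c : ℝ) :
    Measurable fun t : ℝ => ENNReal.ofReal (ε / 4 * Real.exp (-(ε * |t - c|) / 2)) := by
  fun_prop

lemma ModLapAux.laplace_isProbability {ε : ℝ} (hε : 0 < ε) (c : ℝ) :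
    IsProbabilityMeasure (laplaceMeasure ε c) := by
  constructor
  rw [laplaceMeasure, withDensity_apply _ MeasurableSet.univ, setLIntegral_univ]
  have hb : (0:ℝ) < ε / 2 := half_pos hε
  have hint : Integrable (fun t : ℝ => ε / 4 * exp (-(ε / 2 * |t - c|))) :=
    (((ModLapAux.iE hb).const_mul (ε / 4)).comp_sub_right c)
  have harg : ∀ t : ℝ, ε / 4 * Real.exp (-(ε * |t - c|) / 2)
      = ε / 4 * exp (-(ε / 2 * |t - c|)) := by
    intro t; rw [show -(ε * |t - c|) / 2 = -(ε / 2 * |t - c|) by ring]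
  simp_rw [harg]
  rw [← ofReal_integral_eq_lintegral_ofReal hint
    (Filter.Eventually.of_forall fun t => by positivity)]
  rw [MeasureTheory.integral_const_mul,
    integral_sub_right_eq_self (fun t : ℝ => exp (-(ε / 2 * |t|))) c, ModLapAux.M0 hb]
  rw [show ε / 4 * (2 / (ε / 2)) = 1 by field_simp; ring]
  simp

lemma ModLapAux.laplace_lintegral_sq {ε : ℝ} (hε : 0 < ε) (θ : ℝ) :
    ∫⁻ t, ENNReal.ofReal ((θ - t) ^ 2) ∂laplaceMeasure ε 0
      = ENNReal.ofReal (θ ^ 2 + 8 / ε ^ 2) := by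
  have hb : (0:ℝ) < ε / 2 := half_pos hε
  rw [laplaceMeasure, lintegral_withDensity_eq_lintegral_mul _
    (ModLapAux.measurable_laplaceDensity ε 0) (by fun_prop)]
  have harg : ∀ t : ℝ, (ENNReal.ofReal (ε / 4 * Real.exp (-(ε * |t - 0|) / 2)))
        * ENNReal.ofReal ((θ - t) ^ 2)
      = ENNReal.ofReal (ε / 4 * ((θ - t) ^ 2 * exp (-(ε / 2 * |t|)))) := by
    intro t
    rw [sub_zero, show -(ε * |t|) / 2 = -(ε / 2 * |t|) by ring,
      ← ENNReal.ofReal_mul (by positivity)]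
    congr 1; ring
  simp only [Pi.mul_apply]
  simp_rw [harg]
  have hint : Integrable (fun t : ℝ => ε / 4 * ((θ - t) ^ 2 * exp (-(ε / 2 * |t|)))) :=
    (ModLapAux.iSq θ hb).const_mul _
  rw [← ofReal_integral_eq_lintegral_ofReal hint
    (Filter.Eventually.of_forall fun t => by positivity)]
  rw [MeasureTheory.integral_const_mul, ModLapAux.K θ hb]
  congr 1
  field_simp
  ring

/-! The modified Laplace mechanism. -/

lemma ModLapAux.weights_add (ε : ℝ) :
    ENNReal.ofReal (Real.exp (ε / 2) / (Real.exp (ε / 2) + 1))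
      + ENNReal.ofReal (1 / (Real.exp (ε / 2) + 1)) = 1 := by
  have hs : (0:ℝ) < Real.exp (ε / 2) + 1 := by positivity
  rw [← ENNReal.ofReal_add (by positivity) (by positivity)]
  rw [← add_div, div_self hs.ne', ENNReal.ofReal_one]

lemma ModLapAux.modLaplace_isProbability {ε : ℝ} (hε : 0 < ε) (x : Option ℝ) :
    IsProbabilityMeasure (modLaplace ε x) := by
  have hmap : ∀ c, ((laplaceMeasure ε c).map Option.some) Set.univ = 1 := by
    intro c
    rw [Measure.map_apply ModLapAux.measurable_some MeasurableSet.univ, Set.preimage_univ]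
    exact (ModLapAux.laplace_isProbability hε c).measure_univ
  constructor
  cases x <;>
    simp only [modLaplace, Measure.coe_add, Pi.add_apply, Measure.coe_smul, Pi.smul_apply,
      smul_eq_mul, hmap, measure_univ, mul_one] <;>
    exact ModLapAux.weights_add ε

lemma ModLapAux.pi_map_eval {ι : Type*} [Fintype ι] [DecidableEq ι] {α : ι → Type*}
    [∀ i, MeasurableSpace (α i)] (μ : ∀ i, Measure (α i)) [∀ i, IsProbabilityMeasure (μ i)]
    (i : ι) : (Measure.pi μ).map (Function.eval i) = μ i := by
  ext s hs
  rw [Measure.map_apply (measurable_pi_apply i) hs]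
  have h : Function.eval i ⁻¹' s = Set.pi Set.univ (Function.update (fun j => Set.univ) i s) :=
    Set.eval_preimage
  rw [h, Measure.pi_pi]
  rw [Finset.prod_eq_single i (fun j _ hj => by
      rw [Function.update_of_ne hj]; exact measure_univ) (fun h => absurd (Finset.mem_univ i) h)]
  rw [Function.update_self]

lemma ModLapAux.entry_bound {ε : ℝ} (hε : 0 < ε) (θ : ℝ) (hθ : θ ∈ Set.Icc (-1:ℝ) 1) :
    ∫⁻ z, (z.elim 0 fun t => ENNReal.ofReal ((θ - t) ^ 2)) ∂modLaplace ε none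
      ≤ ENNReal.ofReal (1 / (Real.exp (ε / 2) + 1) * (1 + 8 / ε ^ 2)) := by
  have hg : Measurable (fun z : Option ℝ => z.elim 0 fun t => ENNReal.ofReal ((θ - t) ^ 2)) :=
    ModLapAux.measurable_optionElim (by fun_prop) 0
  rw [show modLaplace ε none
      = ENNReal.ofReal (Real.exp (ε / 2) / (Real.exp (ε / 2) + 1)) •
          Measure.dirac (none : Option ℝ) +
        ENNReal.ofReal (1 / (Real.exp (ε / 2) + 1)) • (laplaceMeasure ε 0).map Option.some
      from rfl]
  rw [lintegral_add_measure, lintegral_smul_measure, lintegral_smul_measure,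
    lintegral_dirac' _ hg, lintegral_map hg ModLapAux.measurable_some]
  simp only [Option.elim]
  rw [ModLapAux.laplace_lintegral_sq hε θ]
  rw [smul_zero, zero_add, smul_eq_mul]
  rw [← ENNReal.ofReal_mul (by positivity)]
  apply ENNReal.ofReal_le_ofReal
  have hθ2 : θ ^ 2 ≤ 1 := by nlinarith [hθ.1, hθ.2]
  have hs : (0:ℝ) < 1 / (Real.exp (ε / 2) + 1) := by positivity
  have h8 : (0:ℝ) ≤ 8 / ε ^ 2 := by positivity
  nlinarith

end Aux

/-- Modified Laplace matrix model: if the true rating matrix `Θ` has all entries in `[-1,1]`,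
the expected squared Frobenius norm on artificially created ratings satisfies
`E‖P_{Ω_Z \ Ω_X}(Θ − Z)‖_F² ≤ (mn/(e^{ε/2}+1)) · (1 + 8/ε²)`. -/
theorem modLaplace_created_support_bound (ε : ℝ) (hε : 0 < ε) (m n : ℕ)
    (Θ : Fin m × Fin n → ℝ) (hΘ : ∀ p, Θ p ∈ Set.Icc (-1 : ℝ) 1)
    (X : Fin m × Fin n → Option ℝ)
    (hX : ∀ p, ∀ r : ℝ, X p = some r → r ∈ Set.Icc (-1 : ℝ) 1) :
    ∫⁻ Z, ENNReal.ofReal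
        (∑ p ∈ suppOf Z \ suppOf X, (Θ p - (Z p).getD 0) ^ 2)
        ∂modLaplaceMatrix ε X ≤
      ENNReal.ofReal ((m * n : ℝ) / (Real.exp (ε / 2) + 1) * (1 + 8 / ε ^ 2)) := by
  classical
  haveI hprob : ∀ p : Fin m × Fin n,
      IsProbabilityMeasure ((fun p => modLaplace ε (X p)) p) :=
    fun p => ModLapAux.modLaplace_isProbability hε (X p)
  set C : ENNReal := ENNReal.ofReal (1 / (Real.exp (ε / 2) + 1) * (1 + 8 / ε ^ 2)) with hC
  -- the per-entry integrand
  set g : Fin m × Fin n → Option ℝ → ENNReal := fun p z =>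
    z.elim 0 fun t => if (X p).isSome then 0 else ENNReal.ofReal ((Θ p - t) ^ 2) with hgdef
  have hg : ∀ p, Measurable (g p) := by
    intro p
    by_cases h : (X p).isSome
    · simp only [hgdef, h, if_true]
      exact ModLapAux.measurable_optionElim measurable_const 0
    · simp only [hgdef, Option.not_isSome_iff_eq_none.1 h, Option.isSome_none,
        Bool.false_eq_true, if_false]
      exact ModLapAux.measurable_optionElim (by fun_prop) 0
  -- pointwise rewriting of the integrand
  have hpt : ∀ Z : Fin m × Fin n → Option ℝ,
      ENNReal.ofReal (∑ p ∈ suppOf Z \ suppOf X, (Θ p - (Z p).getD 0) ^ 2)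
        = ∑ p ∈ Finset.univ, g p (Z p) := by
    intro Z
    rw [ENNReal.ofReal_sum_of_nonneg (fun _ _ => sq_nonneg _)]
    have hmem : ∀ p : Fin m × Fin n,
        p ∈ suppOf Z \ suppOf X ↔ (Z p).isSome ∧ ¬(X p).isSome := by
      intro p
      simp [suppOf, Finset.mem_sdiff, Finset.mem_filter]
    rw [Finset.sum_congr rfl (fun p hp => ?_) |>.trans
      (Finset.sum_subset (Finset.subset_univ _) (fun p _ hp => ?_))]
    · -- p in the support difference
      obtain ⟨hz, hxp⟩ := (hmem p).1 hp
      obtain ⟨t, ht⟩ := Option.isSome_iff_exists.1 hz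
      rw [ht]
      simp [hgdef, hxp]
    · -- p outside the support difference
      rw [hmem p, not_and_or, not_not] at hp
      rcases hp with hp | hp
      · rw [Option.not_isSome_iff_eq_none] at hp
        simp [hgdef, hp]
      · cases hzp : Z p with
        | none => simp [hgdef]
        | some t => simp [hgdef, hp]
  calc ∫⁻ Z, ENNReal.ofReal
        (∑ p ∈ suppOf Z \ suppOf X, (Θ p - (Z p).getD 0) ^ 2) ∂modLaplaceMatrix ε X
      = ∫⁻ Z, ∑ p ∈ Finset.univ, g p (Z p) ∂modLaplaceMatrix ε X := by
        exact lintegral_congr hpt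
    _ = ∑ p ∈ Finset.univ, ∫⁻ Z, g p (Z p) ∂modLaplaceMatrix ε X := by
        exact lintegral_finset_sum _ fun p _ => (hg p).comp (measurable_pi_apply p)
    _ = ∑ p ∈ Finset.univ, ∫⁻ z, g p z ∂modLaplace ε (X p) := by
        refine Finset.sum_congr rfl fun p _ => ?_
        rw [modLaplaceMatrix, ← ModLapAux.pi_map_eval (fun p => modLaplace ε (X p)) p,
          lintegral_map (hg p) (measurable_pi_apply p)]
    _ ≤ ∑ _p ∈ (Finset.univ : Finset (Fin m × Fin n)), C := by
        refine Finset.sum_le_sum fun p _ => ?_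
        by_cases h : (X p).isSome
        · have hz : ∀ z : Option ℝ, g p z = 0 := by
            intro z; cases z <;> simp [hgdef, h]
          rw [lintegral_congr hz, lintegral_zero]
          exact zero_le
        · have hxp : X p = none := Option.not_isSome_iff_eq_none.1 h
          have hz : ∀ z : Option ℝ,
              g p z = z.elim 0 fun t => ENNReal.ofReal ((Θ p - t) ^ 2) := by
            intro z; cases z <;> simp [hgdef, h]
          rw [lintegral_congr hz, hxp]
          exact ModLapAux.entry_bound hε (Θ p) (hΘ p)
    _ ≤ ENNReal.ofReal ((m * n : ℝ) / (Real.exp (ε / 2) + 1) * (1 + 8 / ε ^ 2)) := by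
        rw [Finset.sum_const, Finset.card_univ, Fintype.card_prod, Fintype.card_fin,
          Fintype.card_fin, nsmul_eq_mul, hC]
        rw [show ((m * n : ℕ) : ENNReal) = ENNReal.ofReal ((m * n : ℕ) : ℝ) by
          rw [ENNReal.ofReal_natCast]]
        rw [← ENNReal.ofReal_mul (by positivity)]
        apply ENNReal.ofReal_le_ofReal
        apply le_of_eq
        push_cast
        ring
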